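/- If z is a unit of R, then for every m ≥ 1 the minimum Hamming weight of a nonzero codeword of R(1,m) is exactly 2^{m-1}: every nonzero c ∈ R(1,m) has at least 2^{m-1} nonzero coordinates, and the last row g_{m+1} of G_{1,m} is a nonzero codeword with exactly 2^{m-1} nonzero coordinates. Consequently, the minimum Hamming distance between distinct codewords of R(1,m) equals 2^{m-1}. -/

import Mathlib

open Polynomial

noncomputable section

/-- The ring `R = ℤ₄[u]/(u³ − 1)`. -/
abbrev R : Type := Polynomial (ZMod 4) ⧸ Ideal.span ({Polynomial.X ^ 3 - 1} : Set (Polynomial (ZMod 4)))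

/-- The image `u` of the variable in `R`. -/
def u : R := Ideal.Quotient.mk _ Polynomial.X

instance : DecidableEq R := Classical.decEq R

lemma u_pow_three : u ^ 3 = 1 := by
  have h : (Ideal.Quotient.mk (Ideal.span ({Polynomial.X ^ 3 - 1} : Set (Polynomial (ZMod 4))))
      (Polynomial.X ^ 3 - 1) : R) = 0 :=
    Ideal.Quotient.eq_zero_iff_mem.mpr (Ideal.subset_span rfl)
  have h2 : (u ^ 3 - 1 : R) = 0 := by
    simpa [u, map_sub, map_pow] using h
  linear_combination h2

/-- The ring automorphism `σ` of `R` determined by `σ(u) = u²`. -/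
def sigmaR : R →+* R :=
  Ideal.Quotient.lift _ (Polynomial.aeval (u ^ 2)).toRingHom (by
    intro p hp
    obtain ⟨q, rfl⟩ := Ideal.mem_span_singleton.mp hp
    have h6 : ((u ^ 2) ^ 3 : R) = 1 := by
      rw [← pow_mul]
      have : (u : R) ^ (2 * 3) = (u ^ 3) ^ 2 := by ring
      rw [this, u_pow_three, one_pow]
    simp [map_mul, map_sub, map_pow, h6])

/-- The element `δ = 2 + 2u + 2u²` of `R`. -/
def δR : R := 2 + 2 * u + 2 * u ^ 2

/-- The map `ρ : Rⁿ → Rⁿ`, reversing coordinates and applying `σ` coordinatewise. -/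
def ρmap (n : ℕ) (x : Fin n → R) : Fin n → R := fun i => sigmaR (x (Fin.rev i))

/-- The 4-letter DNA alphabet. -/
inductive DNA : Type
  | A | C | G | T
deriving DecidableEq, Inhabited, Repr

/-- Watson–Crick complement of a DNA nucleotide. -/
def DNA.compl : DNA → DNA
  | .A => .T
  | .T => .A
  | .C => .G
  | .G => .C

/-- Complement of a DNA string. -/
def complStr (s : List DNA) : List DNA := s.map DNA.compl

/-- Reverse of a DNA string. -/
def revStr (s : List DNA) : List DNA := s.reverse

/-- Reverse-complement of a DNA string. -/
def rcStr (s : List DNA) : List DNA := s.reverse.map DNA.compl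

/-- Hamming distance between two DNA strings (of equal length). -/
def dH (s t : List DNA) : ℕ := ((s.zip t).filter fun p => p.1 ≠ p.2).length

/-- GC-content of a DNA string: the number of positions carrying `G` or `C`. -/
def gcContent (s : List DNA) : ℕ := (s.filter fun d => d = DNA.G ∨ d = DNA.C).length

/-- A DNA string has no homopolymer run of length greater than `2` iff it has no three
consecutive equal symbols. -/
def NoHomopolymer3 (s : List DNA) : Prop := ¬ ∃ (l r : List DNA) (a : DNA), s = l ++ [a, a, a] ++ r

/-- Blockwise extension of a map `ψ : R → Σ³` to vectors over `R`, by concatenation. -/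
def Ψ (ψ : R → List DNA) {n : ℕ} (x : Fin n → R) : List DNA := (List.ofFn x).flatMap ψ

/-- The map `ψ₂` from the ideal `2R` to DNA strings of length `3`
(the restriction of the DNA map of Table I to `2R`; its value outside `2R` is irrelevant). -/
def ψ₂ (x : R) : List DNA :=
  if x = 0 then [.G, .A, .G]
  else if x = 2 then [.C, .G, .A]
  else if x = 2 * u then [.G, .T, .G]
  else if x = 2 * u ^ 2 then [.A, .G, .C]
  else if x = 2 + 2 * u then [.T, .C, .G]
  else if x = 2 + 2 * u ^ 2 then [.C, .A, .C]
  else if x = 2 * u + 2 * u ^ 2 then [.G, .C, .T]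
  else [.C, .T, .C]

/-- The rows of the Reed–Muller type generator matrix `G_{1,m}` over `R` (with parameter `z`):
`Gmat z m i j` is the entry of `G_{1,m}` in row `i` and column `j`.  Here `G_{1,0} = [z]` and
`G_{1,m+1} = [[G_{1,m}, G_{1,m}], [0 … 0, z … z]]`, which for `m = 1` gives
`G_{1,1} = [[z,z],[0,z]]`. -/
def Gmat (z : R) : (m : ℕ) → Fin (m + 1) → Fin (2 ^ m) → R
  | 0, _, _ => z
  | m + 1, i, j =>
    if hi : (i : ℕ) < m + 1 then
      Gmat z m ⟨i, hi⟩ ⟨(j : ℕ) % 2 ^ m, Nat.mod_lt _ (Nat.two_pow_pos m)⟩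
    else if (j : ℕ) < 2 ^ m then 0 else z

/-- The Reed–Muller type code `R(1,m)`: the `R`-submodule of `R^{2^m}` generated by the rows
of `G_{1,m}`. -/
def RM (z : R) (m : ℕ) : Submodule R (Fin (2 ^ m) → R) := Submodule.span R (Set.range (Gmat z m))

/-- Hamming weight of a vector over `R`. -/
def wt {N : ℕ} (c : Fin N → R) : ℕ := (Finset.univ.filter fun j => c j ≠ 0).card

/-- Hamming distance between two vectors over `R`. -/
def hdistR {N : ℕ} (c c' : Fin N → R) : ℕ := (Finset.univ.filter fun j => c j ≠ c' j).card

/-- Coordinate reversal of a vector over `R`. -/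
def revVec {N : ℕ} (c : Fin N → R) : Fin N → R := fun j => c (Fin.rev j)

/-- `a + bu + cu²` as an element of `R`, for `a, b, c ∈ ℤ₄`. -/
def toR (a b c : ZMod 4) : R :=
  algebraMap (ZMod 4) R a + algebraMap (ZMod 4) R b * u + algebraMap (ZMod 4) R c * u ^ 2

end

-- auxiliary lemmas for stmt14
section Aux

open Finset

/-- `R` is nontrivial: evaluation at `1` gives a ring hom `R → ZMod 4`. -/
noncomputable def evalOneR : R →+* ZMod 4 :=
  Ideal.Quotient.lift _ (Polynomial.evalRingHom (1 : ZMod 4)) (by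
    intro p hp
    obtain ⟨q, rfl⟩ := Ideal.mem_span_singleton.mp hp
    simp)

instance : Nontrivial R := by
  refine ⟨1, 0, fun h => ?_⟩
  have : (evalOneR 1 : ZMod 4) = evalOneR 0 := by rw [h]
  simp only [map_one, map_zero] at this
  exact absurd this (by decide)

lemma unit_ne_zero' {z : R} (hz : IsUnit z) : z ≠ 0 := by
  rintro rfl
  rw [isUnit_zero_iff] at hz
  exact zero_ne_one (α := R) hz

lemma Gmat_castSucc (z : R) (m : ℕ) (i : Fin (m + 1)) (j : Fin (2 ^ (m + 1))) :
    Gmat z (m + 1) i.castSucc j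
      = Gmat z m i ⟨(j : ℕ) % 2 ^ m, Nat.mod_lt _ (Nat.two_pow_pos m)⟩ := by
  have hi : ((i.castSucc : Fin (m + 2)) : ℕ) < m + 1 := i.isLt
  simp only [Gmat, Fin.coe_castSucc, Fin.eta]
  rw [dif_pos i.isLt]

lemma Gmat_last (z : R) (m : ℕ) (j : Fin (2 ^ (m + 1))) :
    Gmat z (m + 1) (Fin.last (m + 1)) j = if (j : ℕ) < 2 ^ m then 0 else z := by
  have hi : ¬ ((Fin.last (m + 1) : Fin (m + 2)) : ℕ) < m + 1 := by simp
  simp only [Gmat, dif_neg hi]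

lemma Gmat_zero_row (z : R) : ∀ (m : ℕ) (j : Fin (2 ^ m)), Gmat z m 0 j = z := by
  intro m
  induction m with
  | zero => intro j; rfl
  | succ m ih =>
      intro j
      have h0 : ((0 : Fin (m + 2)) : ℕ) < m + 1 := Nat.succ_pos m
      simp only [Gmat, dif_pos h0]
      exact ih _

lemma mem_RM_iff (z : R) (m : ℕ) (c : Fin (2 ^ m) → R) :
    c ∈ RM z m ↔ ∃ a : Fin (m + 1) → R, ∑ i, a i • Gmat z m i = c :=
  Submodule.mem_span_range_iff_exists_fun R

lemma wt_eq_sum {N : ℕ} (c : Fin N → R) :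
    wt c = ∑ j : Fin N, if c j ≠ 0 then 1 else 0 :=
  Finset.card_filter _ _

lemma wt_split (m : ℕ) (c : Fin (2 ^ (m + 1)) → R) :
    wt c = wt (fun j : Fin (2 ^ m) =>
        c (Fin.cast (by ring) (Fin.castAdd (2 ^ m) j)))
      + wt (fun j : Fin (2 ^ m) =>
        c (Fin.cast (by ring) (Fin.natAdd (2 ^ m) j))) := by
  have h : 2 ^ m + 2 ^ m = 2 ^ (m + 1) := by ring
  simp only [wt_eq_sum]
  rw [← Fin.sum_congr' (fun j : Fin (2 ^ (m + 1)) => if c j ≠ 0 then 1 else 0) h,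
    Fin.sum_univ_add]

lemma card_filter_lt (N t : ℕ) (h : t < N) :
    #(Finset.univ.filter fun j : Fin N => (j : ℕ) < t) = t := by
  have : (Finset.univ.filter fun j : Fin N => (j : ℕ) < t) = Finset.Iio ⟨t, h⟩ := by
    ext j
    simp [Fin.lt_def]
  rw [this, Fin.card_Iio]

lemma wt_ge (z : R) (hz : z ≠ 0) : ∀ m, ∀ c ∈ RM z m, c ≠ 0 → 2 ^ (m - 1) ≤ wt c := by
  intro m
  induction m with
  | zero =>
      intro c _ hc0
      have : ∃ j, c j ≠ 0 := by
        by_contra h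
        push_neg at h
        exact hc0 (funext h)
      obtain ⟨j, hj⟩ := this
      have hne : (Finset.univ.filter fun j => c j ≠ 0).Nonempty :=
        ⟨j, Finset.mem_filter.mpr ⟨Finset.mem_univ j, hj⟩⟩
      have hpos : 0 < wt c := Finset.card_pos.mpr hne
      exact hpos
  | succ m ih =>
      intro c hc hc0
      obtain ⟨a, ha⟩ := (mem_RM_iff z (m + 1) c).mp hc
      set x : Fin (2 ^ m) → R := fun j => ∑ i : Fin (m + 1), a i.castSucc * Gmat z m i j
        with hxdef
      have hx : x ∈ RM z m := by
        have : x = ∑ i : Fin (m + 1), a i.castSucc • Gmat z m i := by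
          funext j
          simp [hxdef, Finset.sum_apply]
        rw [this]
        exact Submodule.sum_mem _ fun i _ =>
          Submodule.smul_mem _ _ (Submodule.subset_span ⟨i, rfl⟩)
      set w : R := a (Fin.last (m + 1)) * z with hwdef
      have hcj : ∀ j : Fin (2 ^ (m + 1)),
          c j = x ⟨(j : ℕ) % 2 ^ m, Nat.mod_lt _ (Nat.two_pow_pos m)⟩
            + (if (j : ℕ) < 2 ^ m then 0 else w) := by
        intro j
        rw [← ha]
        rw [Finset.sum_apply]
        simp only [Pi.smul_apply, smul_eq_mul]
        rw [Fin.sum_univ_castSucc]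
        congr 1
        · rw [hxdef]
          exact Finset.sum_congr rfl fun i _ => by rw [Gmat_castSucc]
        · rw [Gmat_last, hwdef]
          split <;> simp
      have h2 : 2 ^ m + 2 ^ m = 2 ^ (m + 1) := by ring
      have hL : (fun j : Fin (2 ^ m) =>
          c (Fin.cast h2 (Fin.castAdd (2 ^ m) j))) = x := by
        funext j
        rw [hcj]
        have hv : ((Fin.cast h2 (Fin.castAdd (2 ^ m) j) : Fin (2 ^ (m + 1))) : ℕ)
            = (j : ℕ) := rfl
        rw [if_pos (by rw [hv]; exact j.isLt)]
        rw [add_zero]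
        congr 1
        exact Fin.ext (by simp [hv, Nat.mod_eq_of_lt j.isLt])
      have hR : (fun j : Fin (2 ^ m) =>
          c (Fin.cast h2 (Fin.natAdd (2 ^ m) j))) = fun j => x j + w := by
        funext j
        rw [hcj]
        have hv : ((Fin.cast h2 (Fin.natAdd (2 ^ m) j) : Fin (2 ^ (m + 1))) : ℕ)
            = 2 ^ m + (j : ℕ) := rfl
        rw [if_neg (by rw [hv]; omega)]
        congr 2
        exact Fin.ext (by simp [hv, Nat.add_mod_left, Nat.mod_eq_of_lt j.isLt])
      set y : Fin (2 ^ m) → R := fun j => x j + w with hydef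
      have hy : y ∈ RM z m := by
        have : y = x + a (Fin.last (m + 1)) • Gmat z m 0 := by
          funext j
          simp [hydef, Gmat_zero_row, hwdef]
        rw [this]
        exact Submodule.add_mem _ hx
          (Submodule.smul_mem _ _ (Submodule.subset_span ⟨0, rfl⟩))
      have hsplit : wt c = wt x + wt y := by
        rw [wt_split m c, hL, hR]
      have hms : 2 ^ (m + 1 - 1) = 2 ^ m := by simp
      have hbound : 2 ^ (m + 1 - 1) ≤ wt x + wt y := by
        by_cases hx0 : x = 0
        · -- left part zero, so w ≠ 0 and y is constant w
          have hw0 : w ≠ 0 := by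
            intro hw
            apply hc0
            funext j
            rw [hcj j, hx0]
            simp [hw]
          have : wt y = 2 ^ m := by
            have : (Finset.univ.filter fun j : Fin (2 ^ m) => y j ≠ 0)
                = Finset.univ := by
              ext j
              simp [hydef, hx0, hw0]
            rw [wt, this, Finset.card_univ, Fintype.card_fin]
          omega
        · have hxb := ih x hx hx0
          by_cases hy0 : y = 0
          · -- x is constant -w, all coordinates nonzero
            have hw0 : w ≠ 0 := by
              intro hw
              apply hx0
              funext j
              have := congrFun hy0 j
              simpa [hydef, hw] using this
            have hxc : ∀ j, x j = -w := by
              intro j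
              have := congrFun hy0 j
              simp only [hydef, Pi.zero_apply] at this
              exact eq_neg_of_add_eq_zero_left this
            have : wt x = 2 ^ m := by
              have : (Finset.univ.filter fun j : Fin (2 ^ m) => x j ≠ 0)
                  = Finset.univ := by
                ext j
                simp [hxc j, hw0]
              rw [wt, this, Finset.card_univ, Fintype.card_fin]
            omega
          · have hyb := ih y hy hy0
            have : 2 ^ (m - 1) + 2 ^ (m - 1) ≥ 2 ^ m := by
              cases m with
              | zero => norm_num
              | succ k => simp [pow_succ]; omega
            calc 2 ^ (m + 1 - 1) = 2 ^ m := by simp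
              _ ≤ 2 ^ (m - 1) + 2 ^ (m - 1) := this
              _ ≤ wt x + wt y := Nat.add_le_add hxb hyb
      rw [hsplit]
      exact hbound
      
end Aux


lemma wt_last_row (z : R) (hz : z ≠ 0) (k : ℕ) :
    wt (Gmat z (k + 1) (Fin.last (k + 1))) = 2 ^ k := by
  have hfe : (Finset.univ.filter fun j : Fin (2 ^ (k + 1)) =>
      Gmat z (k + 1) (Fin.last (k + 1)) j ≠ 0)
      = Finset.univ.filter fun j : Fin (2 ^ (k + 1)) => ¬ ((j : ℕ) < 2 ^ k) := by
    ext j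
    rw [Finset.mem_filter, Finset.mem_filter, Gmat_last]
    constructor
    · rintro ⟨hu, hne⟩
      refine ⟨hu, fun hlt => hne ?_⟩
      rw [if_pos hlt]
    · rintro ⟨hu, hge⟩
      rw [if_neg hge]
      exact ⟨hu, hz⟩
  have hk0 := Nat.two_pow_pos k
  have hpow : 2 ^ k < 2 ^ (k + 1) := by
    have : (2:ℕ) ^ (k+1) = 2 ^ k + 2 ^ k := by ring
    omega
  rw [wt, hfe, Finset.filter_not, Finset.card_sdiff_of_subset (Finset.filter_subset _ _),
    Finset.card_univ, Fintype.card_fin, card_filter_lt _ _ hpow]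
  have : (2:ℕ) ^ (k+1) = 2 ^ k + 2 ^ k := by ring
  omega

lemma last_row_mem (z : R) (m : ℕ) : Gmat z m (Fin.last m) ∈ RM z m :=
  Submodule.subset_span ⟨Fin.last m, rfl⟩

lemma last_row_ne_zero (z : R) (hz : z ≠ 0) (k : ℕ) :
    Gmat z (k + 1) (Fin.last (k + 1)) ≠ 0 := by
  intro h
  have hk0 := Nat.two_pow_pos k
  have hpow : 2 ^ k < 2 ^ (k + 1) := by
    have : (2:ℕ) ^ (k+1) = 2 ^ k + 2 ^ k := by ring
    omega
  have := congrFun h ⟨2 ^ k, hpow⟩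
  rw [Gmat_last] at this
  simp at this
  exact hz this

/-- If `z` is a unit of `R`, the minimum Hamming weight of a nonzero codeword of `R(1,m)` is
exactly `2^{m-1}`, the last row of `G_{1,m}` being a nonzero codeword of weight exactly
`2^{m-1}`; consequently the minimum Hamming distance between distinct codewords equals
`2^{m-1}`. -/
theorem stmt14 (z : R) (hz : IsUnit z) (m : ℕ) (hm : 1 ≤ m) :
    (∀ c ∈ RM z m, c ≠ 0 → 2 ^ (m - 1) ≤ wt c) ∧
    (Gmat z m (Fin.last m) ∈ RM z m ∧ Gmat z m (Fin.last m) ≠ 0 ∧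
      wt (Gmat z m (Fin.last m)) = 2 ^ (m - 1)) ∧
    (∀ c ∈ RM z m, ∀ c' ∈ RM z m, c ≠ c' → 2 ^ (m - 1) ≤ hdistR c c') ∧
    (∃ c ∈ RM z m, ∃ c' ∈ RM z m, c ≠ c' ∧ hdistR c c' = 2 ^ (m - 1)) := by
  have hz0 : z ≠ 0 := unit_ne_zero' hz
  obtain ⟨k, rfl⟩ : ∃ k, m = k + 1 := ⟨m - 1, by omega⟩
  have hlow := wt_ge z hz0 (k + 1)
  have hwl : wt (Gmat z (k + 1) (Fin.last (k + 1))) = 2 ^ (k + 1 - 1) := by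
    rw [wt_last_row z hz0 k]
    simp
  have hdist_wt : ∀ c c' : Fin (2 ^ (k + 1)) → R, hdistR c c' = wt (c - c') := by
    intro c c'
    unfold hdistR wt
    congr 1
    ext j
    simp [sub_ne_zero]
  refine ⟨hlow, ⟨last_row_mem z (k + 1), last_row_ne_zero z hz0 k, hwl⟩, ?_, ?_⟩
  · intro c hc c' hc' hne
    rw [hdist_wt]
    exact hlow _ (Submodule.sub_mem _ hc hc') (sub_ne_zero.mpr hne)
  · refine ⟨Gmat z (k + 1) (Fin.last (k + 1)), last_row_mem z (k + 1), 0,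
      Submodule.zero_mem _, last_row_ne_zero z hz0 k, ?_⟩
    rw [hdist_wt, sub_zero, hwl]
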